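/- Let ρ be a state on H_A ⊗ H_B and {M^A_{a|x}}, {M^B_{b|y}} measurement operators such that the correlation P(a,b|x,y) = tr(ρ · M^A_{a|x} ⊗ M^B_{b|y}) is symmetric, i.e., P(a,b|x,y) = P(b,a|y,x) for all a,b,x,y. Define the symmetrized state ρ' = (1/2)[ρ ⊗ |01⟩⟨01| + (SρS†) ⊗ |10⟩⟨10|] on (H ⊗ ℂ²) ⊗ (H ⊗ ℂ²) (with appropriate reordering of factors) and symmetrized measurements N_{a|x} = M^A_{a|x} ⊗ |0⟩⟨0| + M^B_{a|x} ⊗ |1⟩⟨1|. Then tr(ρ' · N_{a|x} ⊗ N_{b|y}) = P(a,b|x,y) for all a,b,x,y. -/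

import Mathlib

open Matrix Kronecker


set_option maxHeartbeats 1000000 in
theorem helper {D : ℕ} {A X : Type*}
    (ρ ρ2 : Matrix (Fin D × Fin D) (Fin D × Fin D) ℂ)
    (hSρ : ∀ p q : Fin D × Fin D, ρ2 p q = ρ (p.2, p.1) (q.2, q.1))
    (MA MB : A → X → Matrix (Fin D) (Fin D) ℂ)
    (a b : A) (x y : X)
    (ρ' : Matrix ((Fin D × Fin 2) × (Fin D × Fin 2)) ((Fin D × Fin 2) × (Fin D × Fin 2)) ℂ)
    (hρ' : ρ' = Matrix.reindex (Equiv.prodProdProdComm (Fin D) (Fin 2) (Fin D) (Fin 2)).symm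
        (Equiv.prodProdProdComm (Fin D) (Fin 2) (Fin D) (Fin 2)).symm
      ((1 / 2 : ℂ) •
        (ρ ⊗ₖ (Matrix.single (0 : Fin 2) (0 : Fin 2) (1 : ℂ) ⊗ₖ Matrix.single (1 : Fin 2) (1 : Fin 2) (1 : ℂ)) +
         ρ2 ⊗ₖ (Matrix.single (1 : Fin 2) (1 : Fin 2) (1 : ℂ) ⊗ₖ Matrix.single (0 : Fin 2) (0 : Fin 2) (1 : ℂ))))) :
    (ρ' *
      ((MA a x ⊗ₖ Matrix.single (0 : Fin 2) (0 : Fin 2) (1 : ℂ)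
      + MB a x ⊗ₖ Matrix.single (1 : Fin 2) (1 : Fin 2) (1 : ℂ)) ⊗ₖ
        (MA b y ⊗ₖ Matrix.single (0 : Fin 2) (0 : Fin 2) (1 : ℂ)
      + MB b y ⊗ₖ Matrix.single (1 : Fin 2) (1 : Fin 2) (1 : ℂ)))).trace
     = (1/2) * ((ρ * (MA a x ⊗ₖ MB b y)).trace + (ρ * (MA b y ⊗ₖ MB a x)).trace) := by
  subst hρ'
  have hswap : ∀ f : Fin D → Fin D → Fin D → Fin D → ℂ,
      (∑ x1, ∑ x2, ∑ x3, ∑ x4, f x1 x2 x3 x4) = ∑ x1, ∑ x2, ∑ x3, ∑ x4, f x2 x1 x4 x3 := by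
    intro f
    rw [Finset.sum_comm]
    exact Finset.sum_congr rfl fun x1 _ => Finset.sum_congr rfl fun x2 _ =>
      Finset.sum_comm
  simp only [Matrix.trace, Matrix.mul_apply, Matrix.diag, Fintype.sum_prod_type, Fin.sum_univ_two,
    Matrix.single, Equiv.prodProdProdComm, hSρ, Finset.mul_sum, Finset.sum_add_distrib,
    Matrix.reindex_apply, Matrix.submatrix_apply, Matrix.smul_apply, Matrix.add_apply,
    Matrix.kroneckerMap_apply]
  simp [Finset.mul_sum, Finset.sum_add_distrib, Fin.sum_univ_two]
  rw [hswap (fun x1 x2 x3 x4 => 2⁻¹ * ρ (x2, x1) (x4, x3) * (MB a x x3 x1 * MA b y x4 x2))]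
  simp only [mul_add, Finset.mul_sum]
  rw [add_comm]
  congr 1 <;> exact Finset.sum_congr rfl fun x1 _ => Finset.sum_congr rfl fun x2 _ =>
    Finset.sum_congr rfl fun x3 _ => Finset.sum_congr rfl fun x4 _ => by ring


/-- Symmetrization of Moroder et al.: if a (possibly asymmetric) strategy
`(ρ, {M^A_{a|x}}, {M^B_{b|y}})` produces a symmetric correlation `P`, then the
symmetrized state `ρ' = ½[ρ ⊗ |01⟩⟨01| + SρS† ⊗ |10⟩⟨10|]` together with the
symmetrized measurements `N_{a|x} = M^A_{a|x} ⊗ |0⟩⟨0| + M^B_{a|x} ⊗ |1⟩⟨1|`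
reproduces the same correlation. -/
theorem symmetrization_preserves_correlation
    {D : ℕ} {A X : Type*}
    (S : Matrix (Fin D × Fin D) (Fin D × Fin D) ℂ)
    (hS : ∀ p q : Fin D × Fin D, S p q = if p.1 = q.2 ∧ p.2 = q.1 then 1 else 0)
    (ρ : Matrix (Fin D × Fin D) (Fin D × Fin D) ℂ)
    (MA MB : A → X → Matrix (Fin D) (Fin D) ℂ)
    (P : A → A → X → X → ℂ)
    (hP : ∀ a b x y, P a b x y = (ρ * (MA a x ⊗ₖ MB b y)).trace)
    (hPsym : ∀ a b x y, P a b x y = P b a y x)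
    -- reordering of tensor factors: Alice holds `Fin D × Fin 2`, Bob holds `Fin D × Fin 2`
    (e : (Fin D × Fin 2) × (Fin D × Fin 2) ≃ (Fin D × Fin D) × (Fin 2 × Fin 2))
    (he : e = Equiv.prodProdProdComm (Fin D) (Fin 2) (Fin D) (Fin 2))
    (ρ' : Matrix ((Fin D × Fin 2) × (Fin D × Fin 2)) ((Fin D × Fin 2) × (Fin D × Fin 2)) ℂ)
    (hρ' : ρ' = Matrix.reindex e.symm e.symm
      ((1 / 2 : ℂ) •
        (ρ ⊗ₖ (Matrix.single (0 : Fin 2) 0 (1 : ℂ) ⊗ₖ Matrix.single (1 : Fin 2) 1 (1 : ℂ)) +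
         (S * ρ * Sᴴ) ⊗ₖ (Matrix.single (1 : Fin 2) 1 (1 : ℂ) ⊗ₖ Matrix.single (0 : Fin 2) 0 (1 : ℂ)))))
    (N : A → X → Matrix (Fin D × Fin 2) (Fin D × Fin 2) ℂ)
    (hN : ∀ a x, N a x = MA a x ⊗ₖ Matrix.single (0 : Fin 2) 0 (1 : ℂ)
      + MB a x ⊗ₖ Matrix.single (1 : Fin 2) 1 (1 : ℂ)) :
    ∀ a b x y, (ρ' * (N a x ⊗ₖ N b y)).trace = P a b x y := by
  intro a b x y
  have hSρ : ∀ p q : Fin D × Fin D, (S * ρ * Sᴴ) p q = ρ (p.2, p.1) (q.2, q.1) := by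
    intro p q
    simp [Matrix.mul_apply, hS, Matrix.conjTranspose_apply, Fintype.sum_prod_type, ite_and,
      apply_ite (starRingEnd ℂ)]
  subst he
  rw [hN, hN, helper ρ (S * ρ * Sᴴ) hSρ MA MB a b x y ρ' hρ', ← hP a b x y, ← hP b a y x,
    ← hPsym a b x y]
  ring
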